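/- Let f : [a₁, a₂] → ℝ and g : [b₁, b₂] → ℝ be continuous, piecewise linear, strictly increasing functions. For α ∈ [a₁ + b₁, a₂ + b₂], define B(α) = {(α₁, α₂) : α₁ ∈ [a₁, a₂], α₂ ∈ [b₁, b₂], α₁ + α₂ = α} and M(α) = min over (α₁, α₂) ∈ B(α) of max(f(α₁), g(α₂)). Then M is well-defined (the minimum exists), continuous, and monotonically nondecreasing on [a₁ + b₁, a₂ + b₂]. -/

import Mathlib

/-- `f` is piecewise linear on `[a, b]` with finitely many pieces. -/
def PiecewiseLinearOn (f : ℝ → ℝ) (a b : ℝ) : Prop :=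
  ∃ (n : ℕ) (c : Fin (n + 1) → ℝ), Monotone c ∧ c 0 = a ∧ c (Fin.last n) = b ∧
    ∀ i : Fin n, ∃ m q : ℝ, ∀ x ∈ Set.Icc (c i.castSucc) (c i.succ), f x = m * x + q

/-- Glue two Lipschitz bounds on adjacent intervals. -/
lemma lip_glue {f : ℝ → ℝ} {K p r s : ℝ} (hpr : p ≤ r) (hrs : r ≤ s)
    (h1 : ∀ x ∈ Set.Icc p r, ∀ y ∈ Set.Icc p r, |f x - f y| ≤ K * |x - y|)
    (h2 : ∀ x ∈ Set.Icc r s, ∀ y ∈ Set.Icc r s, |f x - f y| ≤ K * |x - y|) :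
    ∀ x ∈ Set.Icc p s, ∀ y ∈ Set.Icc p s, |f x - f y| ≤ K * |x - y| := by
  have main : ∀ x ∈ Set.Icc p s, ∀ y ∈ Set.Icc p s, x ≤ y → |f x - f y| ≤ K * |x - y| := by
    rintro x ⟨hx1, hx2⟩ y ⟨hy1, hy2⟩ hxy
    rcases le_total y r with h | h
    · exact h1 x ⟨hx1, le_trans hxy h⟩ y ⟨hy1, h⟩
    rcases le_total r x with h' | h'
    · exact h2 x ⟨h', hx2⟩ y ⟨le_trans h' hxy, hy2⟩
    · have b1 := h1 x ⟨hx1, h'⟩ r ⟨hpr, le_refl r⟩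
      have b2 := h2 r ⟨le_refl r, hrs⟩ y ⟨h, hy2⟩
      have e1 : |x - r| = r - x := by rw [abs_sub_comm]; exact abs_of_nonneg (by linarith)
      have e2 : |r - y| = y - r := by rw [abs_sub_comm]; exact abs_of_nonneg (by linarith)
      have e3 : |x - y| = y - x := by rw [abs_sub_comm]; exact abs_of_nonneg (by linarith)
      calc |f x - f y| ≤ |f x - f r| + |f r - f y| := abs_sub_le _ _ _
        _ ≤ K * (r - x) + K * (y - r) := by rw [e1] at b1; rw [e2] at b2; linarith
        _ = K * |x - y| := by rw [e3]; ring
  intro x hx y hy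
  rcases le_total x y with h | h
  · exact main x hx y hy h
  · rw [abs_sub_comm (f x), abs_sub_comm x]; exact main y hy x hx h

lemma lip_of_pl (f : ℝ → ℝ) (a b : ℝ) (h : PiecewiseLinearOn f a b) :
    ∃ K : ℝ, 0 ≤ K ∧ ∀ x ∈ Set.Icc a b, ∀ y ∈ Set.Icc a b, |f x - f y| ≤ K * |x - y| := by
  obtain ⟨n, c, hmono, h0, hlast, hp⟩ := h
  choose m q hmq using hp
  refine ⟨∑ i, |m i|, Finset.sum_nonneg fun i _ => abs_nonneg _, ?_⟩
  set K := ∑ i, |m i| with hK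
  have hKi : ∀ i : Fin n, |m i| ≤ K :=
    fun i => Finset.single_le_sum (f := fun i => |m i|) (fun j _ => abs_nonneg _)
      (Finset.mem_univ i)
  have key : ∀ j : Fin (n + 1), ∀ x ∈ Set.Icc (c 0) (c j), ∀ y ∈ Set.Icc (c 0) (c j),
      |f x - f y| ≤ K * |x - y| := by
    intro j
    induction j using Fin.induction with
    | zero =>
      rintro x ⟨hx1, hx2⟩ y ⟨hy1, hy2⟩
      have : x = y := by linarith [le_antisymm hx2 hx1, le_antisymm hy2 hy1]
      subst this
      simp
    | succ i ih =>
      have hpiece : ∀ x ∈ Set.Icc (c i.castSucc) (c i.succ),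
          ∀ y ∈ Set.Icc (c i.castSucc) (c i.succ), |f x - f y| ≤ K * |x - y| := by
        intro x hx y hy
        rw [hmq i x hx, hmq i y hy]
        have : m i * x + q i - (m i * y + q i) = m i * (x - y) := by ring
        rw [this, abs_mul]
        exact mul_le_mul_of_nonneg_right (hKi i) (abs_nonneg _)
      exact lip_glue (hmono (Fin.zero_le _)) (hmono (le_of_lt (Fin.castSucc_lt_succ : i.castSucc < i.succ))) ih hpiece
  intro x hx y hy
  rw [← h0, ← hlast] at hx hy
  exact key (Fin.last n) x hx y hy

theorem minmax_over_line_in_box_is_monotone_continuous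
    (a1 a2 b1 b2 : ℝ) (ha : a1 ≤ a2) (hb : b1 ≤ b2)
    (f g : ℝ → ℝ)
    (hfc : ContinuousOn f (Set.Icc a1 a2)) (hfpl : PiecewiseLinearOn f a1 a2)
    (hfm : StrictMonoOn f (Set.Icc a1 a2))
    (hgc : ContinuousOn g (Set.Icc b1 b2)) (hgpl : PiecewiseLinearOn g b1 b2)
    (hgm : StrictMonoOn g (Set.Icc b1 b2))
    (B : ℝ → Set (ℝ × ℝ))
    (hB : ∀ α, B α = {p | p.1 ∈ Set.Icc a1 a2 ∧ p.2 ∈ Set.Icc b1 b2 ∧ p.1 + p.2 = α})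
    (M : ℝ → ℝ)
    (hM : ∀ α, M α = sInf ((fun p : ℝ × ℝ => max (f p.1) (g p.2)) '' B α)) :
    (∀ α ∈ Set.Icc (a1 + b1) (a2 + b2), ∃ p ∈ B α, max (f p.1) (g p.2) = M α) ∧
    ContinuousOn M (Set.Icc (a1 + b1) (a2 + b2)) ∧
    MonotoneOn M (Set.Icc (a1 + b1) (a2 + b2)) := by
  obtain ⟨Kf, hKf0, hKf⟩ := lip_of_pl f a1 a2 hfpl
  obtain ⟨Kg, hKg0, hKg⟩ := lip_of_pl g b1 b2 hgpl
  set K := Kf + Kg with hKdef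
  have hK0 : 0 ≤ K := by positivity
  have hKf' : Kf ≤ K := by linarith
  have hKg' : Kg ≤ K := by linarith
  -- B α is compact
  have hBcomp : ∀ α, IsCompact (B α) := by
    intro α
    have : B α = (Set.Icc a1 a2 ×ˢ Set.Icc b1 b2) ∩ {p : ℝ × ℝ | p.1 + p.2 = α} := by
      rw [hB]; ext p; simp [Set.mem_prod, Set.mem_Icc, Prod.le_def, and_assoc]; tauto
    rw [this]
    exact (isCompact_Icc.prod isCompact_Icc).inter_right
      (isClosed_eq (continuous_fst.add continuous_snd) continuous_const)
  -- B α nonempty for α in range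
  have hBne : ∀ α ∈ Set.Icc (a1 + b1) (a2 + b2), (B α).Nonempty := by
    rintro α ⟨hα1, hα2⟩
    set x := max a1 (min a2 (α - b1)) with hx
    refine ⟨(x, α - x), ?_⟩
    rw [hB]
    have hx1 : a1 ≤ x := le_max_left _ _
    have hx2 : x ≤ a2 := max_le ha (min_le_left _ _)
    have hx3 : x ≤ α - b1 := max_le (by linarith) (min_le_right _ _)
    have hx4 : α - b2 ≤ x := le_trans (le_min (by linarith) (by linarith)) (le_max_right _ _)
    exact ⟨⟨hx1, hx2⟩, ⟨show b1 ≤ α - x by linarith, show α - x ≤ b2 by linarith⟩, by ring⟩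
  -- continuity of the objective on B α
  have hobj : ∀ α, ContinuousOn (fun p : ℝ × ℝ => max (f p.1) (g p.2)) (B α) := by
    intro α
    exact ContinuousOn.sup
      (hfc.comp continuous_fst.continuousOn
        (fun p hp => by rw [hB] at hp; exact hp.1))
      (hgc.comp continuous_snd.continuousOn
        (fun p hp => by rw [hB] at hp; exact hp.2.1))
  -- the minimum is attained
  have hmin : ∀ α ∈ Set.Icc (a1 + b1) (a2 + b2), ∃ p ∈ B α, max (f p.1) (g p.2) = M α := by
    intro α hα
    have himg : IsCompact ((fun p : ℝ × ℝ => max (f p.1) (g p.2)) '' B α) :=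
      (hBcomp α).image_of_continuousOn (hobj α)
    have hne : ((fun p : ℝ × ℝ => max (f p.1) (g p.2)) '' B α).Nonempty :=
      (hBne α hα).image _
    have := himg.sInf_mem hne
    rw [← hM α] at this
    obtain ⟨p, hp, hpv⟩ := this
    exact ⟨p, hp, hpv⟩
  -- M α is a lower bound over B α
  have hlow : ∀ α, ∀ p ∈ B α, M α ≤ max (f p.1) (g p.2) := by
    intro α p hp
    have himg : IsCompact ((fun p : ℝ × ℝ => max (f p.1) (g p.2)) '' B α) :=
      (hBcomp α).image_of_continuousOn (hobj α)
    rw [hM α]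
    exact csInf_le himg.bddBelow ⟨p, hp, rfl⟩
  -- key two-sided estimate
  have key : ∀ α ∈ Set.Icc (a1 + b1) (a2 + b2), ∀ α' ∈ Set.Icc (a1 + b1) (a2 + b2),
      α ≤ α' → M α ≤ M α' ∧ M α' ≤ M α + K * (α' - α) := by
    rintro α ⟨hαl, hαr⟩ α' ⟨hαl', hαr'⟩ hle
    set d := α' - α with hd
    have hd0 : 0 ≤ d := by linarith
    constructor
    · -- M α ≤ M α'
      obtain ⟨p', hp', hv'⟩ := hmin α' ⟨hαl', hαr'⟩
      rw [hB] at hp'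
      obtain ⟨⟨hp1l, hp1r⟩, ⟨hp2l, hp2r⟩, hsum⟩ := hp'
      set x := max a1 (p'.1 - d) with hx
      have hx1 : a1 ≤ x := le_max_left _ _
      have hxle : x ≤ p'.1 := max_le hp1l (by linarith)
      have hx2 : x ≤ a2 := le_trans hxle hp1r
      have hx3 : x ≤ α - b1 := max_le (by linarith) (by linarith)
      have hy2 : α - x ≤ p'.2 := by
        have : p'.1 - d ≤ x := le_max_right _ _
        linarith
      have hmem : (x, α - x) ∈ B α := by
        rw [hB]
        exact ⟨⟨hx1, hx2⟩, ⟨show b1 ≤ α - x by linarith, show α - x ≤ b2 by linarith⟩, by ring⟩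
      have h1 : f x ≤ f p'.1 :=
        hfm.monotoneOn ⟨hx1, hx2⟩ ⟨hp1l, hp1r⟩ hxle
      have h2 : g (α - x) ≤ g p'.2 :=
        hgm.monotoneOn ⟨by linarith, by linarith⟩ ⟨hp2l, hp2r⟩ hy2
      calc M α ≤ max (f x) (g (α - x)) := hlow α _ hmem
        _ ≤ max (f p'.1) (g p'.2) := max_le_max h1 h2
        _ = M α' := hv'
    · -- M α' ≤ M α + K d
      obtain ⟨p, hp, hv⟩ := hmin α ⟨hαl, hαr⟩
      rw [hB] at hp
      obtain ⟨⟨hp1l, hp1r⟩, ⟨hp2l, hp2r⟩, hsum⟩ := hp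
      set x := min a2 (p.1 + d) with hx
      have hx2 : x ≤ a2 := min_le_left _ _
      have hxge : p.1 ≤ x := le_min hp1r (by linarith)
      have hx1 : a1 ≤ x := le_trans hp1l hxge
      have hxub : x ≤ p.1 + d := min_le_right _ _
      have hy1 : p.2 ≤ α' - x := by linarith
      have hyub : α' - x - p.2 ≤ d := by linarith
      have hy2 : α' - x ≤ b2 := by
        have : α' - b2 ≤ x := le_min (by linarith) (by linarith)
        linarith
      have hmem : (x, α' - x) ∈ B α' := by
        rw [hB]
        exact ⟨⟨hx1, hx2⟩, ⟨show b1 ≤ α' - x by linarith, hy2⟩, by ring⟩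
      have h1 : f x ≤ f p.1 + K * d := by
        have := hKf x ⟨hx1, hx2⟩ p.1 ⟨hp1l, hp1r⟩
        have habs : |x - p.1| ≤ d := by rw [abs_of_nonneg (by linarith)]; linarith
        have h2 := abs_le.1 this
        have : Kf * |x - p.1| ≤ K * d :=
          mul_le_mul hKf' habs (abs_nonneg _) hK0
        linarith [h2.2]
      have h2 : g (α' - x) ≤ g p.2 + K * d := by
        have := hKg (α' - x) ⟨by linarith, hy2⟩ p.2 ⟨hp2l, hp2r⟩
        have habs : |α' - x - p.2| ≤ d := by rw [abs_of_nonneg (by linarith)]; linarith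
        have h3 := abs_le.1 this
        have : Kg * |α' - x - p.2| ≤ K * d :=
          mul_le_mul hKg' habs (abs_nonneg _) hK0
        linarith [h3.2]
      calc M α' ≤ max (f x) (g (α' - x)) := hlow α' _ hmem
        _ ≤ max (f p.1 + K * d) (g p.2 + K * d) := max_le_max h1 h2
        _ = max (f p.1) (g p.2) + K * d := by rw [max_add_add_right]
        _ = M α + K * d := by rw [hv]
  refine ⟨hmin, ?_, ?_⟩
  · -- continuity via Lipschitz
    have hlip : LipschitzOnWith (Real.toNNReal K) M (Set.Icc (a1 + b1) (a2 + b2)) := by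
      rw [lipschitzOnWith_iff_dist_le_mul]
      intro x hx y hy
      rw [Real.dist_eq, Real.dist_eq, Real.coe_toNNReal K hK0]
      rcases le_total x y with h | h
      · obtain ⟨h1, h2⟩ := key x hx y hy h
        rw [abs_of_nonpos (by linarith), abs_of_nonpos (by linarith)]
        linarith
      · obtain ⟨h1, h2⟩ := key y hy x hx h
        rw [abs_of_nonneg (by linarith), abs_of_nonneg (by linarith)]
        linarith
    exact hlip.continuousOn
  · intro x hx y hy h
    exact (key x hx y hy h).1
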